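/- Let f : X → ℝ̄ and for n ≥ 2 define f^{n∪}(x) = sup{⟨x−a₁,a₁*⟩ + ⟨a₁−a₂,a₂*⟩ + … + ⟨a_{n−1}−a_n, a_n*⟩ + f(a_n) : (a_k, a_k*) ∈ Graph ∂f for k = 1,…,n}. Then f^{n∪} = f^∪ for every n ≥ 2. -/

import Mathlib

open scoped Topology

section Defs

variable {X : Type*} [AddCommGroup X] [Module ℝ X] [TopologicalSpace X]

/-- `p ∈ ∂f(x)`: `f x` is finite and `f y ≥ f x + ⟨y - x, p⟩` for all `y`. -/
def IsSubgrad (f : X → EReal) (x : X) (p : X →L[ℝ] ℝ) : Prop :=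
  f x ≠ ⊤ ∧ f x ≠ ⊥ ∧ ∀ y, f x + (p (y - x) : EReal) ≤ f y

/-- Graph of the convex subdifferential of `f`. -/
def graphSub (f : X → EReal) : Set (X × (X →L[ℝ] ℝ)) :=
  {q | IsSubgrad f q.1 q.2}

/-- Domain `D(∂f)` of the subdifferential. -/
def subdiffDom (f : X → EReal) : Set X := {x | ∃ p, IsSubgrad f x p}

/-- Range `R(∂f)` of the subdifferential. -/
def subdiffRan (f : X → EReal) : Set (X →L[ℝ] ℝ) := {p | ∃ x, IsSubgrad f x p}

/-- Monotone subset of `X × X*`. -/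
def MonotoneSet (S : Set (X × (X →L[ℝ] ℝ))) : Prop :=
  ∀ a ∈ S, ∀ b ∈ S, 0 ≤ a.2 (a.1 - b.1) - b.2 (a.1 - b.1)

/-- Maximal monotone subset of `X × X*` (maximal w.r.t. graph inclusion). -/
def MaxMonotoneSet (S : Set (X × (X →L[ℝ] ℝ))) : Prop :=
  MonotoneSet S ∧ ∀ T, MonotoneSet T → S ⊆ T → T = S

/-- Proper function: never `−∞` and not identically `+∞`. -/
def ProperE {Y : Type*} (f : Y → EReal) : Prop :=
  (∃ x, f x ≠ ⊤) ∧ ∀ x, f x ≠ ⊥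

/-- Convexity of an extended-real-valued function via its epigraph. -/
def ConvexEpi (f : X → EReal) : Prop :=
  Convex ℝ {q : X × ℝ | f q.1 ≤ (q.2 : EReal)}

/-- The lsc convex hull: the greatest lsc convex function majorized by `f`. -/
noncomputable def lscConvHull (f : X → EReal) : X → EReal := fun x =>
  sSup {v | ∃ g : X → EReal, ConvexEpi g ∧ LowerSemicontinuous g ∧ g ≤ f ∧ v = g x}

/-- Convex conjugate w.r.t. the dual system `(X, X*)`. -/
noncomputable def conjE (f : X → EReal) (p : X →L[ℝ] ℝ) : EReal :=
  ⨆ x, ((p x : EReal) - f x)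

/-- Biconjugate `f**`. -/
noncomputable def biconjE (f : X → EReal) (x : X) : EReal :=
  ⨆ p : X →L[ℝ] ℝ, ((p x : EReal) - conjE f p)

/-- Fitzpatrick function of `∂f`. -/
noncomputable def fitzSub (f : X → EReal) (x : X) (p : X →L[ℝ] ℝ) : EReal :=
  ⨆ a, ⨆ s, ⨆ _ : IsSubgrad f a s, ((s (x - a) + p a : ℝ) : EReal)

/-- Upper envelope `f^∪(x) = sup{⟨x−a, a*⟩ + f(a) : (a,a*) ∈ Graph ∂f}`. -/
noncomputable def upperEnv (f : X → EReal) (x : X) : EReal :=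
  ⨆ a, ⨆ s, ⨆ _ : IsSubgrad f a s, ((s (x - a) : EReal) + f a)

end Defs


lemma chain_le {X : Type*} [AddCommGroup X] [Module ℝ X] [TopologicalSpace X]
    (f : X → EReal) (n : ℕ) (a : Fin (n + 1) → X) (s : Fin (n + 1) → (X →L[ℝ] ℝ))
    (h : ∀ k, IsSubgrad f (a k) (s k)) :
    ((∑ k : Fin n, (s k.succ) (a k.castSucc - a k.succ) : ℝ) : EReal) + f (a (Fin.last n))
      ≤ f (a 0) := by
  induction n with
  | zero => simp
  | succ n ih =>
    have key := ih (fun k => a k.succ) (fun k => s k.succ) (fun k => h k.succ)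
    simp only [Fin.succ_castSucc, Fin.succ_last] at key
    rw [Fin.sum_univ_succ]
    push_cast
    rw [add_assoc]
    calc ((s (0:Fin (n+1)).succ) (a (0:Fin (n+1)).castSucc - a (0:Fin (n+1)).succ) : EReal)
          + ((∑ k : Fin n, ((s k.succ.succ) (a k.succ.castSucc - a k.succ.succ) : ℝ) : ℝ)
          + f (a (Fin.last (n + 1))))
        ≤ ((s (0:Fin (n+1)).succ) (a (0:Fin (n+1)).castSucc - a (0:Fin (n+1)).succ) : EReal)
          + f (a (0:Fin n.succ).succ) := by
          gcongr
      _ ≤ f (a 0) := by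
          rw [add_comm]
          have := (h (0:Fin (n+1)).succ).2.2 (a 0)
          simpa using this

theorem iterated_upperEnv_eq {X : Type*} [AddCommGroup X] [Module ℝ X] [TopologicalSpace X]
    [IsTopologicalAddGroup X] [ContinuousSMul ℝ X] [LocallyConvexSpace ℝ X] [T2Space X]
    (f : X → EReal) (m : ℕ) (x : X) :
    (⨆ a : Fin (m + 2) → X, ⨆ s : Fin (m + 2) → (X →L[ℝ] ℝ),
      ⨆ _ : ∀ k, IsSubgrad f (a k) (s k),
        ((((s 0) (x - a 0) +
            ∑ k : Fin (m + 1), (s k.succ) (a k.castSucc - a k.succ) : ℝ)) : EReal)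
          + f (a (Fin.last (m + 1))))
      = upperEnv f x := by
  apply le_antisymm
  · refine iSup_le fun a => iSup_le fun s => iSup_le fun h => ?_
    have hch := chain_le f (m + 1) a s h
    have step1 : (((s 0) (x - a 0) +
          ∑ k : Fin (m + 1), (s k.succ) (a k.castSucc - a k.succ) : ℝ) : EReal)
          + f (a (Fin.last (m + 1)))
        ≤ ((s 0) (x - a 0) : EReal) + f (a 0) := by
      push_cast
      rw [add_assoc]
      gcongr
    refine step1.trans ?_
    exact le_iSup_of_le (a 0) (le_iSup_of_le (s 0) (le_iSup_of_le (h 0) le_rfl))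
  · refine iSup_le fun a => iSup_le fun s => iSup_le fun h => ?_
    refine le_iSup_of_le (fun _ => a) (le_iSup_of_le (fun _ => s)
      (le_iSup_of_le (fun _ => h) ?_))
    simp
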